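/- Let 0 < p ≤ q < ∞ and let k, l, n be positive integers, and set p̄ = min(1,p). Then e_{k+l-1}(id : ℓ_p^n(ℝ) → ℓ_q^n(ℝ)) ≤ 2^{1/p̄} · e_k(id : ℓ_p^n(ℝ) → ℓ_p^n(ℝ))^{p/q} · e_l(id : ℓ_p^n(ℝ) → ℓ_∞^n(ℝ))^{1 - p/q}. -/

import Mathlib

open scoped ENNReal

/-- The `ℓ_p` (quasi-)norm on `ℝ^n`, `0 < p ≤ ∞`. -/
noncomputable def lpnorm (p : ℝ≥0∞) {n : ℕ} (x : Fin n → ℝ) : ℝ :=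
  if p = ∞ then ⨆ i, |x i| else (∑ i, |x i| ^ p.toReal) ^ (1 / p.toReal)

/-- The `k`-th dyadic entropy number of the identity `id : ℓ_p^n(ℝ) → ℓ_q^n(ℝ)`:
the infimum of `r > 0` such that the unit ball of `ℓ_p^n` can be covered by `2^(k-1)`
balls of radius `r` in `ℓ_q^n`. -/
noncomputable def entropyLp (p q : ℝ≥0∞) (n k : ℕ) : ℝ :=
  sInf {r : ℝ | 0 < r ∧ ∃ S : Finset (Fin n → ℝ), S.card ≤ 2 ^ (k - 1) ∧
    ∀ x : Fin n → ℝ, lpnorm p x ≤ 1 → ∃ y ∈ S, lpnorm q (x - y) ≤ r}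

lemma lpnorm_nonneg (p : ℝ≥0∞) {n : ℕ} (x : Fin n → ℝ) : 0 ≤ lpnorm p x := by
  unfold lpnorm
  split
  · exact Real.iSup_nonneg fun i => abs_nonneg _
  · exact Real.rpow_nonneg
      (Finset.sum_nonneg fun i _ => Real.rpow_nonneg (abs_nonneg _) _) _

lemma lpnorm_neg (p : ℝ≥0∞) {n : ℕ} (x : Fin n → ℝ) : lpnorm p (-x) = lpnorm p x := by
  unfold lpnorm
  simp [Pi.neg_apply, abs_neg]

lemma lpnorm_sub_comm (p : ℝ≥0∞) {n : ℕ} (x y : Fin n → ℝ) :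
    lpnorm p (x - y) = lpnorm p (y - x) := by
  rw [← lpnorm_neg p (x - y), neg_sub]

lemma lpnorm_smul (p : ℝ≥0∞) (hp : p ≠ 0) {n : ℕ} (c : ℝ) (x : Fin n → ℝ) :
    lpnorm p (c • x) = |c| * lpnorm p x := by
  unfold lpnorm
  split_ifs with h
  · simp only [Pi.smul_apply, smul_eq_mul, abs_mul]
    rw [Real.mul_iSup_of_nonneg (abs_nonneg c)]
  · have hP : 0 < p.toReal := ENNReal.toReal_pos hp h
    simp only [Pi.smul_apply, smul_eq_mul, abs_mul]
    have h1 : ∀ i : Fin n, (|c| * |x i|) ^ p.toReal = |c| ^ p.toReal * |x i| ^ p.toReal :=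
      fun i => Real.mul_rpow (abs_nonneg _) (abs_nonneg _)
    simp only [h1, ← Finset.mul_sum]
    rw [Real.mul_rpow (Real.rpow_nonneg (abs_nonneg _) _)
      (Finset.sum_nonneg fun i _ => Real.rpow_nonneg (abs_nonneg _) _),
      ← Real.rpow_mul (abs_nonneg c), mul_one_div, div_self hP.ne', Real.rpow_one]

lemma abs_le_lpnorm_top {n : ℕ} (x : Fin n → ℝ) (i : Fin n) : |x i| ≤ lpnorm ∞ x := by
  unfold lpnorm
  rw [if_pos rfl]
  exact le_ciSup (f := fun j => |x j|) (Set.Finite.bddAbove (Set.finite_range _)) i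

lemma lpnorm_top_le (p : ℝ≥0∞) (hp : p ≠ 0) (hpt : p ≠ ∞) {n : ℕ} (hn : 0 < n)
    (x : Fin n → ℝ) : lpnorm ∞ x ≤ lpnorm p x := by
  have hP : 0 < p.toReal := ENNReal.toReal_pos hp hpt
  have hinst : Nonempty (Fin n) := ⟨⟨0, hn⟩⟩
  unfold lpnorm
  rw [if_pos rfl, if_neg hpt]
  refine ciSup_le fun i => ?_
  have h1 : |x i| = (|x i| ^ p.toReal) ^ (1 / p.toReal) := by
    rw [← Real.rpow_mul (abs_nonneg _), mul_one_div, div_self hP.ne', Real.rpow_one]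
  rw [h1]
  exact Real.rpow_le_rpow (Real.rpow_nonneg (abs_nonneg _) _)
    (Finset.single_le_sum (fun j _ => Real.rpow_nonneg (abs_nonneg _) _)
      (Finset.mem_univ i)) (by positivity)

lemma lpnorm_top_add_le {n : ℕ} (hn : 0 < n) (x y : Fin n → ℝ) :
    lpnorm ∞ (x + y) ≤ lpnorm ∞ x + lpnorm ∞ y := by
  have hinst : Nonempty (Fin n) := ⟨⟨0, hn⟩⟩
  unfold lpnorm
  rw [if_pos rfl, if_pos rfl, if_pos rfl]
  refine ciSup_le fun i => ?_
  refine (abs_add_le _ _).trans (add_le_add ?_ ?_)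
  · exact le_ciSup (f := fun j => |x j|) (Set.Finite.bddAbove (Set.finite_range _)) i
  · exact le_ciSup (f := fun j => |y j|) (Set.Finite.bddAbove (Set.finite_range _)) i

lemma real_rpow_add_le {x y c : ℝ} (hx : 0 ≤ x) (hy : 0 ≤ y) (hc : 0 ≤ c) (hc1 : c ≤ 1) :
    (x + y) ^ c ≤ x ^ c + y ^ c := by
  have h := NNReal.rpow_add_le_add_rpow x.toNNReal y.toNNReal hc hc1
  calc (x + y) ^ c = (((x.toNNReal + y.toNNReal : NNReal) : ℝ)) ^ c := by
        rw [NNReal.coe_add, Real.coe_toNNReal x hx, Real.coe_toNNReal y hy]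
    _ = (((x.toNNReal + y.toNNReal) ^ c : NNReal) : ℝ) := (NNReal.coe_rpow _ _).symm
    _ ≤ ((x.toNNReal ^ c + y.toNNReal ^ c : NNReal) : ℝ) := NNReal.coe_le_coe.2 h
    _ = x ^ c + y ^ c := by
        rw [NNReal.coe_add, NNReal.coe_rpow, NNReal.coe_rpow,
          Real.coe_toNNReal x hx, Real.coe_toNNReal y hy]

lemma lpnorm_add_le_two (p : ℝ≥0∞) (hp : p ≠ 0) (hpt : p ≠ ∞) {n : ℕ}
    (x y : Fin n → ℝ) (hx : lpnorm p x ≤ 1) (hy : lpnorm p y ≤ 1) :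
    lpnorm p (x + y) ≤ 2 ^ (1 / (min 1 p).toReal) := by
  have hP : 0 < p.toReal := ENNReal.toReal_pos hp hpt
  rcases le_or_gt 1 p with h1 | h1
  · have hmin : (min 1 p).toReal = 1 := by rw [min_eq_left h1, ENNReal.toReal_one]
    rw [hmin, div_one, Real.rpow_one]
    haveI := Fact.mk h1
    have key : ∀ z : Fin n → ℝ,
        lpnorm p z = ‖(WithLp.equiv p (Fin n → ℝ)).symm z‖ := by
      intro z
      rw [PiLp.norm_eq_sum hP]
      unfold lpnorm
      rw [if_neg hpt]
      simp [WithLp.equiv_symm_apply, PiLp.toLp_apply, Real.norm_eq_abs]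
    have hxy : (WithLp.equiv p (Fin n → ℝ)).symm (x + y) =
        (WithLp.equiv p (Fin n → ℝ)).symm x + (WithLp.equiv p (Fin n → ℝ)).symm y :=
      WithLp.toLp_add p x y
    rw [key, hxy]
    calc ‖(WithLp.equiv p (Fin n → ℝ)).symm x + (WithLp.equiv p (Fin n → ℝ)).symm y‖
        ≤ ‖(WithLp.equiv p (Fin n → ℝ)).symm x‖ + ‖(WithLp.equiv p (Fin n → ℝ)).symm y‖ :=
          norm_add_le _ _
      _ ≤ 1 + 1 := add_le_add (by rw [← key]; exact hx) (by rw [← key]; exact hy)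
      _ = 2 := by norm_num
  · have hP1 : p.toReal ≤ 1 := by
      have := ENNReal.toReal_mono ENNReal.one_ne_top h1.le
      simpa using this
    have hmin : (min 1 p).toReal = p.toReal := by rw [min_eq_right h1.le]
    rw [hmin]
    have cancel : ∀ S : ℝ, 0 ≤ S → (S ^ (1 / p.toReal)) ^ p.toReal = S := by
      intro S hS
      rw [← Real.rpow_mul hS, one_div_mul_cancel hP.ne', Real.rpow_one]
    unfold lpnorm at hx hy ⊢
    rw [if_neg hpt] at hx hy ⊢
    have hsum : ∀ (z : Fin n → ℝ),
        (∑ i, |z i| ^ p.toReal) ^ (1 / p.toReal) ≤ 1 → ∑ i, |z i| ^ p.toReal ≤ 1 := by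
      intro z hz
      have h0 : 0 ≤ ∑ i, |z i| ^ p.toReal :=
        Finset.sum_nonneg fun i _ => Real.rpow_nonneg (abs_nonneg _) _
      calc ∑ i, |z i| ^ p.toReal
          = ((∑ i, |z i| ^ p.toReal) ^ (1 / p.toReal)) ^ p.toReal := (cancel _ h0).symm
        _ ≤ 1 ^ p.toReal := Real.rpow_le_rpow (Real.rpow_nonneg h0 _) hz hP.le
        _ = 1 := Real.one_rpow _
    have hstep : ∑ i, |x i + y i| ^ p.toReal ≤ 2 := by
      calc ∑ i, |x i + y i| ^ p.toReal
          ≤ ∑ i, (|x i| ^ p.toReal + |y i| ^ p.toReal) := by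
            refine Finset.sum_le_sum fun i _ => ?_
            calc |x i + y i| ^ p.toReal
                ≤ (|x i| + |y i|) ^ p.toReal :=
                  Real.rpow_le_rpow (abs_nonneg _) (abs_add_le _ _) hP.le
              _ ≤ |x i| ^ p.toReal + |y i| ^ p.toReal :=
                  real_rpow_add_le (abs_nonneg _) (abs_nonneg _) hP.le hP1
        _ = (∑ i, |x i| ^ p.toReal) + ∑ i, |y i| ^ p.toReal := Finset.sum_add_distrib
        _ ≤ 1 + 1 := add_le_add (hsum x hx) (hsum y hy)
        _ = 2 := by norm_num
    have : ∀ i : Fin n, |(x + y) i| = |x i + y i| := fun i => rfl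
    simp only [this]
    exact Real.rpow_le_rpow
      (Finset.sum_nonneg fun i _ => Real.rpow_nonneg (abs_nonneg _) _) hstep (by positivity)

lemma lpnorm_interp (p q : ℝ≥0∞) (hp : p ≠ 0) (hpt : p ≠ ∞) (hq : q ≠ 0) (hqt : q ≠ ∞)
    (hpq : p ≤ q) {n : ℕ} (v : Fin n → ℝ) :
    lpnorm q v ≤ lpnorm p v ^ (p.toReal / q.toReal) *
      lpnorm ∞ v ^ (1 - p.toReal / q.toReal) := by
  have hP : 0 < p.toReal := ENNReal.toReal_pos hp hpt
  have hQ : 0 < q.toReal := ENNReal.toReal_pos hq hqt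
  have hPQ : p.toReal ≤ q.toReal := (ENNReal.toReal_le_toReal hpt hqt).2 hpq
  set M := lpnorm ∞ v with hM
  have hM0 : 0 ≤ M := lpnorm_nonneg _ _
  have hMi : ∀ i, |v i| ≤ M := abs_le_lpnorm_top v
  have hq' : lpnorm q v = (∑ i, |v i| ^ q.toReal) ^ (1 / q.toReal) := by
    unfold lpnorm; rw [if_neg hqt]
  have hp' : lpnorm p v = (∑ i, |v i| ^ p.toReal) ^ (1 / p.toReal) := by
    unfold lpnorm; rw [if_neg hpt]
  have hSp0 : 0 ≤ ∑ i, |v i| ^ p.toReal :=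
    Finset.sum_nonneg fun i _ => Real.rpow_nonneg (abs_nonneg _) _
  have step : ∑ i, |v i| ^ q.toReal ≤ (∑ i, |v i| ^ p.toReal) * M ^ (q.toReal - p.toReal) := by
    rw [Finset.sum_mul]
    refine Finset.sum_le_sum fun i _ => ?_
    have hsplit : |v i| ^ q.toReal = |v i| ^ p.toReal * |v i| ^ (q.toReal - p.toReal) := by
      rw [← Real.rpow_add' (abs_nonneg _) (by simpa using hQ.ne')]
      ring_nf
    rw [hsplit]
    exact mul_le_mul_of_nonneg_left
      (Real.rpow_le_rpow (abs_nonneg _) (hMi i) (sub_nonneg.2 hPQ))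
      (Real.rpow_nonneg (abs_nonneg _) _)
  rw [hq', hp']
  calc (∑ i, |v i| ^ q.toReal) ^ (1 / q.toReal)
      ≤ ((∑ i, |v i| ^ p.toReal) * M ^ (q.toReal - p.toReal)) ^ (1 / q.toReal) :=
        Real.rpow_le_rpow
          (Finset.sum_nonneg fun i _ => Real.rpow_nonneg (abs_nonneg _) _) step
          (by positivity)
    _ = (∑ i, |v i| ^ p.toReal) ^ (1 / q.toReal) *
          (M ^ (q.toReal - p.toReal)) ^ (1 / q.toReal) :=
        Real.mul_rpow hSp0 (Real.rpow_nonneg hM0 _)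
    _ = ((∑ i, |v i| ^ p.toReal) ^ (1 / p.toReal)) ^ (p.toReal / q.toReal) *
          M ^ (1 - p.toReal / q.toReal) := by
        rw [← Real.rpow_mul hSp0, ← Real.rpow_mul hM0]
        congr 1
        · congr 1
          field_simp
        · congr 1
          field_simp

theorem entropy_lp_interpolation (p q : ℝ≥0∞) (hp : 0 < p) (hpq : p ≤ q) (hq : q ≠ ∞)
    (k l n : ℕ) (hk : 0 < k) (hl : 0 < l) (hn : 0 < n) :
    entropyLp p q n (k + l - 1) ≤
      2 ^ (1 / (min 1 p).toReal) * entropyLp p p n k ^ (p.toReal / q.toReal) *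
        entropyLp p ∞ n l ^ (1 - p.toReal / q.toReal) := by
  have hp0 : p ≠ 0 := hp.ne'
  have hpt : p ≠ ∞ := (hpq.trans_lt (lt_top_iff_ne_top.2 hq)).ne
  have hq0 : q ≠ 0 := fun h => hp0 (le_antisymm (h ▸ hpq) (zero_le : 0 ≤ p))
  have hP : 0 < p.toReal := ENNReal.toReal_pos hp0 hpt
  have hQ : 0 < q.toReal := ENNReal.toReal_pos hq0 hq
  have hPQ : p.toReal ≤ q.toReal := (ENNReal.toReal_le_toReal hpt hq).2 hpq
  set a : ℝ := p.toReal / q.toReal with ha_def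
  set b : ℝ := 1 - a with hb_def
  have ha : 0 < a := div_pos hP hQ
  have ha1 : a ≤ 1 := (div_le_one hQ).2 hPQ
  have hb : 0 ≤ b := by simp [hb_def, ha1]
  set pb : ℝ := (min 1 p).toReal with hpb_def
  have hpb_eq : pb = min 1 p.toReal := by
    rw [hpb_def, ENNReal.toReal_min ENNReal.one_ne_top hpt, ENNReal.toReal_one]
  have hpb0 : 0 < pb := by rw [hpb_eq]; exact lt_min one_pos hP
  have hpb1 : pb ≤ 1 := by rw [hpb_eq]; exact min_le_left _ _
  set C : ℝ := 2 ^ (1 / pb) with hC_def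
  have hC0 : 0 < C := Real.rpow_pos_of_pos two_pos _
  set A := {r : ℝ | 0 < r ∧ ∃ S : Finset (Fin n → ℝ), S.card ≤ 2 ^ (k - 1) ∧
    ∀ x : Fin n → ℝ, lpnorm p x ≤ 1 → ∃ y ∈ S, lpnorm p (x - y) ≤ r} with hA_def
  set B := {r : ℝ | 0 < r ∧ ∃ S : Finset (Fin n → ℝ), S.card ≤ 2 ^ (l - 1) ∧
    ∀ x : Fin n → ℝ, lpnorm p x ≤ 1 → ∃ y ∈ S, lpnorm ∞ (x - y) ≤ r} with hB_def
  have hEA : entropyLp p p n k = sInf A := rfl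
  have hEB : entropyLp p ∞ n l = sInf B := rfl
  have h1A : (1 : ℝ) ∈ A := by
    refine ⟨one_pos, {0}, by simpa using Nat.one_le_two_pow, fun x hx => ⟨0, Finset.mem_singleton_self 0, by simpa using hx⟩⟩
  have h1B : (1 : ℝ) ∈ B := by
    refine ⟨one_pos, {0}, by simpa using Nat.one_le_two_pow, fun x hx => ⟨0, Finset.mem_singleton_self 0, ?_⟩⟩
    simpa using (lpnorm_top_le p hp0 hpt hn x).trans hx
  have hbddA : BddBelow A := ⟨0, fun r hr => hr.1.le⟩
  have hbddB : BddBelow B := ⟨0, fun r hr => hr.1.le⟩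
  have hbddQ : BddBelow {r : ℝ | 0 < r ∧ ∃ S : Finset (Fin n → ℝ),
      S.card ≤ 2 ^ (k + l - 1 - 1) ∧
      ∀ x : Fin n → ℝ, lpnorm p x ≤ 1 → ∃ y ∈ S, lpnorm q (x - y) ≤ r} :=
    ⟨0, fun r hr => hr.1.le⟩
  -- the key covering construction
  have Key : ∀ r ∈ A, r ≤ 1 → ∀ s ∈ B,
      entropyLp p q n (k + l - 1) ≤ C * r ^ a * s ^ b := by
    rintro r ⟨hr0, S, hScard, hScov⟩ hr1 s ⟨hs0, T, hTcard, hTcov⟩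
    have hgooddef : ∀ t : Fin n → ℝ, ∃ u : Fin n → ℝ,
        (∃ w : Fin n → ℝ, lpnorm p w ≤ 1 ∧ lpnorm ∞ (w - t) ≤ s) →
        (lpnorm p u ≤ 1 ∧ lpnorm ∞ (u - t) ≤ s) := by
      intro t
      by_cases h : ∃ w : Fin n → ℝ, lpnorm p w ≤ 1 ∧ lpnorm ∞ (w - t) ≤ s
      · exact ⟨h.choose, fun _ => h.choose_spec⟩
      · exact ⟨0, fun hh => absurd hh h⟩
    choose φ hφ using hgooddef
    refine csInf_le hbddQ ?_
    refine ⟨by positivity, (S ×ˢ T).image (fun yt => yt.1 + r • φ yt.2), ?_, ?_⟩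
    · calc ((S ×ˢ T).image (fun yt => yt.1 + r • φ yt.2)).card
          ≤ (S ×ˢ T).card := Finset.card_image_le
        _ = S.card * T.card := Finset.card_product S T
        _ ≤ 2 ^ (k - 1) * 2 ^ (l - 1) := Nat.mul_le_mul hScard hTcard
        _ = 2 ^ (k + l - 1 - 1) := by rw [← pow_add]; congr 1; omega
    · intro x hx
      obtain ⟨y, hyS, hxy⟩ := hScov x hx
      set w : Fin n → ℝ := r⁻¹ • (x - y) with hw_def
      have hw : lpnorm p w ≤ 1 := by
        rw [hw_def, lpnorm_smul p hp0, abs_of_pos (inv_pos.2 hr0)]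
        calc r⁻¹ * lpnorm p (x - y) ≤ r⁻¹ * r :=
              mul_le_mul_of_nonneg_left hxy (inv_pos.2 hr0).le
          _ = 1 := inv_mul_cancel₀ hr0.ne'
      obtain ⟨t, htT, hwt⟩ := hTcov w hw
      have hu0 : lpnorm p (φ t) ≤ 1 ∧ lpnorm ∞ (φ t - t) ≤ s := hφ t ⟨w, hw, hwt⟩
      refine ⟨y + r • φ t, Finset.mem_image.2 ⟨(y, t), Finset.mem_product.2 ⟨hyS, htT⟩, rfl⟩, ?_⟩
      have hxu : x - (y + r • φ t) = r • (w - φ t) := by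
        rw [hw_def, smul_sub, smul_smul, mul_inv_cancel₀ hr0.ne', one_smul]
        abel
      have hwu_p : lpnorm p (w - φ t) ≤ C := by
        have h2 := lpnorm_add_le_two p hp0 hpt w (-φ t) hw (by rw [lpnorm_neg]; exact hu0.1)
        rw [← sub_eq_add_neg] at h2
        exact h2
      have hwu_top : lpnorm ∞ (w - φ t) ≤ 2 * s := by
        have hsplit : w - φ t = (w - t) + (t - φ t) := by abel
        rw [hsplit]
        calc lpnorm ∞ ((w - t) + (t - φ t))
            ≤ lpnorm ∞ (w - t) + lpnorm ∞ (t - φ t) := lpnorm_top_add_le hn _ _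
          _ ≤ s + s := add_le_add hwt (by rw [lpnorm_sub_comm]; exact hu0.2)
          _ = 2 * s := by ring
      have h1 : lpnorm p (x - (y + r • φ t)) ≤ r * C := by
        rw [hxu, lpnorm_smul p hp0, abs_of_pos hr0]
        exact mul_le_mul_of_nonneg_left hwu_p hr0.le
      have h2 : lpnorm ∞ (x - (y + r • φ t)) ≤ 2 * s := by
        rw [hxu, lpnorm_smul ∞ (by simp), abs_of_pos hr0]
        calc r * lpnorm ∞ (w - φ t) ≤ r * (2 * s) :=
              mul_le_mul_of_nonneg_left hwu_top hr0.le
          _ ≤ 1 * (2 * s) := mul_le_mul_of_nonneg_right hr1 (by positivity)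
          _ = 2 * s := one_mul _
      calc lpnorm q (x - (y + r • φ t))
          ≤ lpnorm p (x - (y + r • φ t)) ^ a * lpnorm ∞ (x - (y + r • φ t)) ^ b :=
            lpnorm_interp p q hp0 hpt hq0 hq hpq _
        _ ≤ (r * C) ^ a * (2 * s) ^ b := by
            refine mul_le_mul (Real.rpow_le_rpow (lpnorm_nonneg _ _) h1 ha.le)
              (Real.rpow_le_rpow (lpnorm_nonneg _ _) h2 hb)
              (Real.rpow_nonneg (lpnorm_nonneg _ _) _)
              (Real.rpow_nonneg (by positivity) _)
        _ = (C ^ a * 2 ^ b) * (r ^ a * s ^ b) := by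
            rw [Real.mul_rpow hr0.le hC0.le, Real.mul_rpow two_pos.le hs0.le]
            ring
        _ ≤ C * (r ^ a * s ^ b) := by
            refine mul_le_mul_of_nonneg_right ?_ (by positivity)
            have e1 : C ^ a * (2:ℝ) ^ b = (2 : ℝ) ^ ((1 / pb) * a + b) := by
              rw [hC_def, ← Real.rpow_mul two_pos.le, ← Real.rpow_add two_pos]
            have e2 : (1 / pb) * a + b ≤ 1 / pb := by
              have hbb : b ≤ b / pb := by
                rw [le_div_iff₀ hpb0]
                exact mul_le_of_le_one_right hb hpb1
              calc (1 / pb) * a + b ≤ (1 / pb) * a + b / pb := by linarith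
                _ = (a + b) / pb := by ring
                _ = 1 / pb := by rw [hb_def]; ring_nf
            rw [e1, hC_def]
            exact Real.rpow_le_rpow_of_exponent_le one_le_two e2
        _ = C * r ^ a * s ^ b := by ring
  -- final assembly via an epsilon argument and a limit
  have hEA0 : 0 ≤ entropyLp p p n k := by
    rw [hEA]; exact Real.sInf_nonneg fun r hr => hr.1.le
  have hEB0 : 0 ≤ entropyLp p ∞ n l := by
    rw [hEB]; exact Real.sInf_nonneg fun r hr => hr.1.le
  set eA := entropyLp p p n k with heA_def
  set eB := entropyLp p ∞ n l with heB_def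
  have main : ∀ ε : ℝ, 0 < ε →
      entropyLp p q n (k + l - 1) ≤ C * (eA + ε) ^ a * (eB + ε) ^ b := by
    intro ε hε
    obtain ⟨r, hrA, hr1, hrlt⟩ : ∃ r ∈ A, r ≤ 1 ∧ r < eA + ε := by
      rcases le_or_gt (eA + ε) 1 with h | h
      · obtain ⟨r, hrA, hrlt⟩ := exists_lt_of_csInf_lt ⟨1, h1A⟩
          (show sInf A < eA + ε by rw [← hEA]; linarith)
        exact ⟨r, hrA, hrlt.le.trans h, hrlt⟩
      · exact ⟨1, h1A, le_refl 1, h⟩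
    obtain ⟨s, hsB, hslt⟩ := exists_lt_of_csInf_lt ⟨1, h1B⟩
      (show sInf B < eB + ε by rw [← hEB]; linarith)
    have hr0 : 0 < r := hrA.1
    have hs0 : 0 < s := hsB.1
    calc entropyLp p q n (k + l - 1) ≤ C * r ^ a * s ^ b := Key r hrA hr1 s hsB
      _ ≤ C * (eA + ε) ^ a * (eB + ε) ^ b := by
          refine mul_le_mul (mul_le_mul_of_nonneg_left
            (Real.rpow_le_rpow hr0.le hrlt.le ha.le) hC0.le)
            (Real.rpow_le_rpow hs0.le hslt.le hb)
            (Real.rpow_nonneg hs0.le _) (by positivity)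
  have htend : Filter.Tendsto (fun ε : ℝ => C * (eA + ε) ^ a * (eB + ε) ^ b)
      (nhdsWithin 0 (Set.Ioi 0)) (nhds (C * eA ^ a * eB ^ b)) := by
    have hA' : ContinuousAt (fun ε : ℝ => (eA + ε) ^ a) 0 := by
      have h1 : ContinuousAt (fun x : ℝ => x ^ a) (eA + 0) := by
        rw [add_zero]
        exact Real.continuousAt_rpow_const eA a (Or.inr ha.le)
      exact h1.comp (by fun_prop)
    have hB' : ContinuousAt (fun ε : ℝ => (eB + ε) ^ b) 0 := by
      have h1 : ContinuousAt (fun x : ℝ => x ^ b) (eB + 0) := by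
        rw [add_zero]
        exact Real.continuousAt_rpow_const eB b (Or.inr hb)
      exact h1.comp (by fun_prop)
    have h2 : ContinuousAt (fun ε : ℝ => C * (eA + ε) ^ a * (eB + ε) ^ b) 0 :=
      ((continuousAt_const : ContinuousAt (fun _ : ℝ => C) 0).mul hA').mul hB'
    have h3 := h2.tendsto
    simp only [add_zero] at h3
    exact h3.mono_left nhdsWithin_le_nhds
  refine ge_of_tendsto htend ?_
  filter_upwards [self_mem_nhdsWithin] with ε hε
  exact main ε hε
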